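/- Let δ > 0 and let f : ℝ² → ℝ be continuously differentiable with f(x) = 0 whenever |x| ≥ δ. Then ∫_{ℝ²} f(x)² dx ≤ δ²·∫_{ℝ²} ⟨x, ∇f(x)⟩²/|x|² dx. -/

import Mathlib

open MeasureTheory
open scoped RealInnerProductSpace

noncomputable section

/-- The weighted Poincaré inequality of Step 5 of the proof of Lemma 8.10: for a
compactly supported C¹ function on ℝ², the L² norm is controlled by the radial derivative. -/
theorem radial_poincare (δ : ℝ) (hδ : 0 < δ) (f : EuclideanSpace ℝ (Fin 2) → ℝ)
    (hf : ContDiff ℝ 1 f)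
    (hsupp : ∀ x : EuclideanSpace ℝ (Fin 2), δ ≤ ‖x‖ → f x = 0) :
    (∫ x : EuclideanSpace ℝ (Fin 2), (f x) ^ 2) ≤
      δ ^ 2 * ∫ x : EuclideanSpace ℝ (Fin 2), ⟪x, gradient f x⟫ ^ 2 / ‖x‖ ^ 2 := by
  classical
  have hfd : Differentiable ℝ f := hf.differentiable one_ne_zero
  have hfc : Continuous f := hf.continuous
  -- compact support of f
  have hcs : HasCompactSupport f := by
    refine HasCompactSupport.intro (isCompact_closedBall (0 : EuclideanSpace ℝ (Fin 2)) δ) ?_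
    intro x hx
    apply hsupp
    simp only [Metric.mem_closedBall, dist_zero_right, not_le] at hx
    exact hx.le
  -- the radial derivative, as inner product with the gradient
  set w : EuclideanSpace ℝ (Fin 2) → ℝ := fun x => ⟪x, gradient f x⟫ with hw
  have hw_eq : ∀ x, w x = fderiv ℝ f x x := by
    intro x
    simp only [hw]
    rw [real_inner_comm, gradient, ← InnerProductSpace.toDual_apply_apply,
      LinearIsometryEquiv.apply_symm_apply]
  have hgrad_cont : Continuous fun x => gradient f x := by
    have : Continuous fun x => fderiv ℝ f x := hf.continuous_fderiv one_ne_zero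
    exact (LinearIsometryEquiv.continuous _).comp this
  have hw_cont : Continuous w := by
    exact continuous_inner.comp (continuous_id.prodMk hgrad_cont)
  -- F = f^2
  set F : EuclideanSpace ℝ (Fin 2) → ℝ := fun x => f x * f x with hF
  have hFd : Differentiable ℝ F := hfd.mul hfd
  have hFc : Continuous F := hfc.mul hfc
  have hFcs : HasCompactSupport F := hcs.mul_left
  have hFc1 : ContDiff ℝ 1 F := hf.mul hf
  have hFderiv_cont : Continuous fun x => fderiv ℝ F x := hFc1.continuous_fderiv one_ne_zero
  have hFderiv : ∀ x v, fderiv ℝ F x v = 2 * f x * fderiv ℝ f x v := by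
    intro x v
    simp only [hF]
    rw [fderiv_fun_mul (hfd x) (hfd x)]
    simp only [ContinuousLinearMap.add_apply, ContinuousLinearMap.smul_apply, smul_eq_mul]
    ring
  -- basis vectors
  set e : Fin 2 → EuclideanSpace ℝ (Fin 2) := fun i => EuclideanSpace.single i (1 : ℝ) with he
  -- vanishing of fderiv F outside tsupport F
  have hFderiv_zero : ∀ x, x ∉ tsupport F → fderiv ℝ F x = 0 := by
    intro x hx
    by_contra h
    exact hx (support_fderiv_subset (𝕜 := ℝ) (f := F) h)
  -- integrability facts
  have int_coord : ∀ i : Fin 2,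
      Integrable (fun x : EuclideanSpace ℝ (Fin 2) => fderiv ℝ F x (e i) * x i) := by
    intro i
    apply Continuous.integrable_of_hasCompactSupport
    · exact (hFderiv_cont.clm_apply continuous_const).mul (EuclideanSpace.proj i).continuous
    · refine HasCompactSupport.intro hFcs ?_
      intro x hx
      rw [hFderiv_zero x hx]
      simp
  have int_F : Integrable F := hFc.integrable_of_hasCompactSupport hFcs
  have int_Fx : ∀ i : Fin 2,
      Integrable (fun x : EuclideanSpace ℝ (Fin 2) => F x * x i) := by
    intro i
    apply Continuous.integrable_of_hasCompactSupport
    · exact hFc.mul (EuclideanSpace.proj i).continuous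
    · exact hFcs.mul_right
  -- integration by parts in each coordinate direction
  have ibp : ∀ i : Fin 2,
      (∫ x : EuclideanSpace ℝ (Fin 2), F x) =
        -∫ x : EuclideanSpace ℝ (Fin 2), fderiv ℝ F x (e i) * x i := by
    intro i
    have hg : Differentiable ℝ (fun y : EuclideanSpace ℝ (Fin 2) => y i) :=
      (EuclideanSpace.proj i : EuclideanSpace ℝ (Fin 2) →L[ℝ] ℝ).differentiable
    have hgderiv : ∀ x : EuclideanSpace ℝ (Fin 2),
        fderiv ℝ (fun y : EuclideanSpace ℝ (Fin 2) => y i) x =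
          (EuclideanSpace.proj i : EuclideanSpace ℝ (Fin 2) →L[ℝ] ℝ) := fun x =>
      (EuclideanSpace.proj i : EuclideanSpace ℝ (Fin 2) →L[ℝ] ℝ).fderiv
    have hsimp : (fun x : EuclideanSpace ℝ (Fin 2) =>
        F x * fderiv ℝ (fun y : EuclideanSpace ℝ (Fin 2) => y i) x (e i)) = F := by
      funext x
      rw [hgderiv x, he]
      simp
    have := integral_mul_fderiv_eq_neg_fderiv_mul_of_integrable
      (μ := (volume : Measure (EuclideanSpace ℝ (Fin 2))))
      (f := F) (g := fun y : EuclideanSpace ℝ (Fin 2) => y i) (v := e i)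
      (int_coord i) (by rw [hsimp]; exact int_F) (int_Fx i) (fun x _ => hFd x) (fun x _ => hg x)
    rw [hsimp] at this
    simpa using this
  -- decomposition of x in the basis
  have hx_decomp : ∀ x : EuclideanSpace ℝ (Fin 2),
      fderiv ℝ F x (e 0) * x 0 + fderiv ℝ F x (e 1) * x 1 = fderiv ℝ F x x := by
    intro x
    have hxe : x = x 0 • e 0 + x 1 • e 1 := by
      rw [he]; ext j; fin_cases j <;> simp
    calc fderiv ℝ F x (e 0) * x 0 + fderiv ℝ F x (e 1) * x 1
        = fderiv ℝ F x (x 0 • e 0 + x 1 • e 1) := by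
          rw [map_add, (fderiv ℝ F x).map_smul, (fderiv ℝ F x).map_smul]
          simp only [smul_eq_mul]
          ring
      _ = fderiv ℝ F x x := by rw [← hxe]
  -- the divergence identity : ∫ f² = - ∫ f ⟪x, ∇f⟫
  have key : (∫ x : EuclideanSpace ℝ (Fin 2), F x) =
      -∫ x : EuclideanSpace ℝ (Fin 2), f x * w x := by
    have h2 : (2 : ℝ) * ∫ x : EuclideanSpace ℝ (Fin 2), F x =
        -∫ x : EuclideanSpace ℝ (Fin 2),
          (fderiv ℝ F x (e 0) * x 0 + fderiv ℝ F x (e 1) * x 1) := by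
      rw [integral_add (int_coord 0) (int_coord 1), neg_add, two_mul]
      congr 1
      · exact ibp 0
      · exact ibp 1
    have h3 : ∀ x : EuclideanSpace ℝ (Fin 2),
        fderiv ℝ F x (e 0) * x 0 + fderiv ℝ F x (e 1) * x 1 = 2 * (f x * w x) := by
      intro x
      rw [hx_decomp x, hFderiv x x, hw_eq x]
      ring
    simp only [h3] at h2
    rw [integral_const_mul] at h2
    linarith
  -- integrand on the right-hand side
  set u : EuclideanSpace ℝ (Fin 2) → ℝ := fun x => w x ^ 2 / ‖x‖ ^ 2 with hu
  have hu_nonneg : ∀ x, 0 ≤ u x := by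
    intro x; simp only [hu]; positivity
  -- integrability of u
  have hgrad_zero : ∀ x, x ∉ tsupport f → gradient f x = 0 := by
    intro x hx
    have : fderiv ℝ f x = 0 := by
      by_contra h
      exact hx (support_fderiv_subset (𝕜 := ℝ) (f := f) h)
    rw [gradient, this, map_zero]
  have int_bound : Integrable (fun x : EuclideanSpace ℝ (Fin 2) => ‖gradient f x‖ ^ 2) := by
    apply Continuous.integrable_of_hasCompactSupport
    · exact (hgrad_cont.norm).pow 2
    · refine HasCompactSupport.intro hcs ?_
      intro x hx
      rw [hgrad_zero x hx]
      simp
  have int_u : Integrable u := by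
    refine Integrable.mono int_bound ?_ ?_
    · exact ((hw_cont.pow 2).measurable.div ((continuous_norm.pow 2).measurable)).aestronglyMeasurable
    · refine Filter.Eventually.of_forall fun x => ?_
      rw [Real.norm_eq_abs, Real.norm_eq_abs, abs_of_nonneg (hu_nonneg x),
        abs_of_nonneg (by positivity)]
      rcases eq_or_ne x 0 with rfl | hx0
      · simp [hu]
      · have hxn : 0 < ‖x‖ := norm_pos_iff.2 hx0
        simp only [hu]
        rw [div_le_iff₀ (by positivity)]
        calc w x ^ 2 ≤ (‖x‖ * ‖gradient f x‖) ^ 2 := by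
              simp only [hw]
              have := abs_real_inner_le_norm x (gradient f x)
              nlinarith [abs_nonneg (⟪x, gradient f x⟫), sq_abs (⟪x, gradient f x⟫)]
          _ = ‖gradient f x‖ ^ 2 * ‖x‖ ^ 2 := by ring
  have int_fw : Integrable (fun x : EuclideanSpace ℝ (Fin 2) => f x * w x) := by
    apply Continuous.integrable_of_hasCompactSupport
    · exact hfc.mul hw_cont
    · exact hcs.mul_right
  -- pointwise Young inequality
  have pointwise : ∀ x : EuclideanSpace ℝ (Fin 2),
      -(f x * w x) ≤ F x / 2 + δ ^ 2 * u x / 2 := by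
    intro x
    have hRHS₀ : 0 ≤ δ ^ 2 * u x / 2 := by
      have := hu_nonneg x; positivity
    rcases le_or_gt δ ‖x‖ with hxd | hxd
    · have hFx : F x = 0 := by simp only [hF]; rw [hsupp x hxd]; ring
      rw [hFx, hsupp x hxd]
      simp only [zero_mul, mul_zero, neg_zero]
      linarith [hRHS₀]
    · rcases eq_or_ne x 0 with rfl | hx0
      · have hw0 : w 0 = 0 := by simp [hw]
        rw [hw0]
        simp only [mul_zero, neg_zero]
        have : 0 ≤ F (0 : EuclideanSpace ℝ (Fin 2)) / 2 := by
          simp only [hF]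
          nlinarith [mul_self_nonneg (f 0)]
        linarith
      · have hxn : 0 < ‖x‖ := norm_pos_iff.2 hx0
        set c : ℝ := w x / ‖x‖ with hc
        have hwc : w x = c * ‖x‖ := by rw [hc]; field_simp
        have huc : u x = c ^ 2 := by
          simp only [hu, hc]; rw [div_pow]
        calc -(f x * w x) ≤ |f x * w x| := neg_le_abs _
          _ = |f x| * |c| * ‖x‖ := by
              rw [abs_mul, hwc, abs_mul, abs_of_nonneg hxn.le]; ring
          _ ≤ |f x| * |c| * δ := by
              apply mul_le_mul_of_nonneg_left hxd.le (by positivity)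
          _ ≤ (|f x| ^ 2 + (δ * |c|) ^ 2) / 2 := by nlinarith [sq_nonneg (|f x| - δ * |c|)]
          _ = F x / 2 + δ ^ 2 * u x / 2 := by
              rw [huc]
              simp only [hF]
              rw [sq_abs, mul_pow, sq_abs]
              ring
  -- conclude
  have step : (∫ x : EuclideanSpace ℝ (Fin 2), F x) ≤
      (∫ x : EuclideanSpace ℝ (Fin 2), F x) / 2 +
        δ ^ 2 * (∫ x : EuclideanSpace ℝ (Fin 2), u x) / 2 := by
    calc (∫ x : EuclideanSpace ℝ (Fin 2), F x)
        = -∫ x : EuclideanSpace ℝ (Fin 2), f x * w x := key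
      _ = ∫ x : EuclideanSpace ℝ (Fin 2), -(f x * w x) := by rw [integral_neg]
      _ ≤ ∫ x : EuclideanSpace ℝ (Fin 2), (F x / 2 + δ ^ 2 * u x / 2) := by
          apply integral_mono int_fw.neg ((int_F.div_const 2).add ((int_u.const_mul (δ ^ 2)).div_const 2)) pointwise
      _ = (∫ x : EuclideanSpace ℝ (Fin 2), F x) / 2 +
          δ ^ 2 * (∫ x : EuclideanSpace ℝ (Fin 2), u x) / 2 := by
          rw [integral_add (int_F.div_const 2) ((int_u.const_mul (δ ^ 2)).div_const 2),
            integral_div, integral_div, integral_const_mul]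
  have hfin : (∫ x : EuclideanSpace ℝ (Fin 2), F x) ≤
      δ ^ 2 * ∫ x : EuclideanSpace ℝ (Fin 2), u x := by linarith
  have hFeq : (fun x : EuclideanSpace ℝ (Fin 2) => f x ^ 2) = F := by
    funext x; simp only [hF]; ring
  calc (∫ x : EuclideanSpace ℝ (Fin 2), f x ^ 2)
      = ∫ x : EuclideanSpace ℝ (Fin 2), F x := by rw [hFeq]
    _ ≤ δ ^ 2 * ∫ x : EuclideanSpace ℝ (Fin 2), u x := hfin
    _ = δ ^ 2 * ∫ x : EuclideanSpace ℝ (Fin 2), ⟪x, gradient f x⟫ ^ 2 / ‖x‖ ^ 2 := rfl
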